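/- Let τ be a smooth binary relation on words over an alphabet Σ, fix a language M, and let L ⊆ M be a τ-independent language. For every i ≥ 1, writing D_i = μ^i(L) \ μ^{i-1}(L): ind(μ^i(L)) is contained in the disjoint union of μ^i(L) and σ_{μ^{i-1}(L)}^{≥2}(D_i), which in turn is contained in μ^i(L) ∪ (τ⁻¹)^{≥2}(D_i). -/
import Mathlib


open Set

/-- Image of a language under a binary word relation: τ(X) = {y | ∃ x ∈ X, τ(x,y)}. -/
def img {α : Type*} (τ : List α → List α → Prop) (X : Set (List α)) : Set (List α) :=
  {y | ∃ x ∈ X, τ x y}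

/-- Inverse image: τ⁻¹(X) = {y | ∃ x ∈ X, τ(y,x)}. -/
def pre {α : Type*} (τ : List α → List α → Prop) (X : Set (List α)) : Set (List α) :=
  {y | ∃ x ∈ X, τ y x}

/-- ind(X) = M \ (τ(X) ∪ τ⁻¹(X)). -/
def ind {α : Type*} (τ : List α → List α → Prop) (M X : Set (List α)) : Set (List α) :=
  M \ (img τ X ∪ pre τ X)

/-- The max-min operator μ(X) = ind(X) \ τ⁻¹(ind(X)). -/
def mu {α : Type*} (τ : List α → List α → Prop) (M X : Set (List α)) : Set (List α) :=
  ind τ M X \ pre τ (ind τ M X)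

/-- σ_X(A) = τ⁻¹(A) ∩ ind(X). -/
def sig {α : Type*} (τ : List α → List α → Prop) (M X A : Set (List α)) : Set (List α) :=
  pre τ A ∩ ind τ M X

/-- Φ^*(A) = ⋃_{i≥0} Φ^i(A). -/
def opStar {α : Type*} (Φ : Set (List α) → Set (List α)) (A : Set (List α)) : Set (List α) :=
  ⋃ i : ℕ, Φ^[i] A

/-- Φ^+(A) = ⋃_{i≥1} Φ^i(A). -/
def opPlus {α : Type*} (Φ : Set (List α) → Set (List α)) (A : Set (List α)) : Set (List α) :=
  ⋃ i ≥ 1, Φ^[i] A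

/-- Φ^∩(A) = ⋂_{i≥1} Φ^i(A). -/
def opInter {α : Type*} (Φ : Set (List α) → Set (List α)) (A : Set (List α)) : Set (List α) :=
  ⋂ i ≥ 1, Φ^[i] A

/-- Φ^{≥k}(A) = ⋃_{i≥k} Φ^i(A). -/
def opGe {α : Type*} (Φ : Set (List α) → Set (List α)) (k : ℕ) (A : Set (List α)) : Set (List α) :=
  ⋃ i ≥ k, Φ^[i] A

/-- A language is τ-independent if τ(L) ∩ L = ∅. -/
def indep {α : Type*} (τ : List α → List α → Prop) (L : Set (List α)) : Prop :=
  img τ L ∩ L = ∅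

/-- τ is smooth (relative to M) if σ_X^∩(ind(X)) ⊆ σ_X^*(μ(X)) for every language X. -/
def smooth {α : Type*} (τ : List α → List α → Prop) (M : Set (List α)) : Prop :=
  ∀ X : Set (List α), opInter (sig τ M X) (ind τ M X) ⊆ opStar (sig τ M X) (mu τ M X)

/-- L is P_τ-maximal relative to M: L ⊆ M, L is τ-independent, and no word of M \ L
can be added to L keeping τ-independence. -/
def maximalIndep {α : Type*} (τ : List α → List α → Prop) (M L : Set (List α)) : Prop :=
  L ⊆ M ∧ indep τ L ∧ ∀ w ∈ M \ L, ¬ indep τ (L ∪ {w})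

section Aux

variable {α : Type*} (τ : List α → List α → Prop) (M : Set (List α))

lemma pre_mono {A B : Set (List α)} (h : A ⊆ B) : pre τ A ⊆ pre τ B := by
  rintro z ⟨x, hx, hz⟩; exact ⟨x, h hx, hz⟩

lemma pre_union (A B : Set (List α)) : pre τ (A ∪ B) = pre τ A ∪ pre τ B := by
  ext z
  constructor
  · rintro ⟨x, hx | hx, hz⟩
    · exact Or.inl ⟨x, hx, hz⟩
    · exact Or.inr ⟨x, hx, hz⟩
  · rintro (⟨x, hx, hz⟩ | ⟨x, hx, hz⟩)
    · exact ⟨x, Or.inl hx, hz⟩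
    · exact ⟨x, Or.inr hx, hz⟩

lemma sig_mono (Y : Set (List α)) {A B : Set (List α)} (h : A ⊆ B) :
    sig τ M Y A ⊆ sig τ M Y B :=
  Set.inter_subset_inter_left _ (pre_mono τ h)

lemma sig_iter_mono (Y : Set (List α)) (n : ℕ) {A B : Set (List α)} (h : A ⊆ B) :
    (sig τ M Y)^[n] A ⊆ (sig τ M Y)^[n] B := by
  induction n generalizing A B with
  | zero => simpa using h
  | succ n ih =>
    rw [Function.iterate_succ_apply, Function.iterate_succ_apply]
    exact ih (sig_mono τ M Y h)

lemma sig_union (Y A B : Set (List α)) :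
    sig τ M Y (A ∪ B) = sig τ M Y A ∪ sig τ M Y B := by
  unfold sig
  rw [pre_union, Set.union_inter_distrib_right]

lemma sig_iter_union (Y A B : Set (List α)) (n : ℕ) :
    (sig τ M Y)^[n] (A ∪ B) = (sig τ M Y)^[n] A ∪ (sig τ M Y)^[n] B := by
  induction n generalizing A B with
  | zero => simp
  | succ n ih =>
    rw [Function.iterate_succ_apply, sig_union, ih, ← Function.iterate_succ_apply,
      ← Function.iterate_succ_apply]

lemma sig_empty (Y : Set (List α)) : sig τ M Y ∅ = ∅ := by
  unfold sig pre
  ext z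
  simp

lemma sig_self (Y : Set (List α)) : sig τ M Y Y = ∅ := by
  unfold sig ind
  ext z
  simp only [Set.mem_inter_iff, Set.mem_diff, Set.mem_union, Set.mem_empty_iff_false,
    iff_false]
  rintro ⟨hp, _, hn⟩
  exact hn (Or.inr hp)

lemma sig_iter_empty (Y : Set (List α)) (n : ℕ) : (sig τ M Y)^[n] ∅ = ∅ := by
  induction n with
  | zero => simp
  | succ n ih => rw [Function.iterate_succ_apply, sig_empty, ih]

lemma sig_iter_self (Y : Set (List α)) (n : ℕ) :
    (sig τ M Y)^[n + 1] Y = ∅ := by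
  rw [Function.iterate_succ_apply, sig_self, sig_iter_empty]

lemma sig_subset_pre (Y A : Set (List α)) : sig τ M Y A ⊆ pre τ A :=
  Set.inter_subset_left

lemma sig_subset_ind (Y A : Set (List α)) : sig τ M Y A ⊆ ind τ M Y :=
  Set.inter_subset_right

lemma sig_iter_subset_pre_iter (Y A : Set (List α)) (n : ℕ) :
    (sig τ M Y)^[n] A ⊆ (pre τ)^[n] A := by
  induction n with
  | zero => simp
  | succ n ih =>
    rw [Function.iterate_succ_apply', Function.iterate_succ_apply']
    exact (sig_subset_pre τ M Y _).trans (pre_mono τ ih)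

lemma ind_anti {Y X : Set (List α)} (h : Y ⊆ X) : ind τ M X ⊆ ind τ M Y := by
  rintro z ⟨hzM, hz⟩
  refine ⟨hzM, ?_⟩
  rintro (⟨x, hx, hxz⟩ | ⟨x, hx, hxz⟩)
  · exact hz (Or.inl ⟨x, h hx, hxz⟩)
  · exact hz (Or.inr ⟨x, h hx, hxz⟩)

lemma subset_mu {Y : Set (List α)} (hYM : Y ⊆ M) (hY : indep τ Y) :
    Y ⊆ mu τ M Y := by
  intro y hy
  have hyind : y ∈ ind τ M Y := by
    refine ⟨hYM hy, ?_⟩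
    rintro (himg | ⟨x, hx, hxy⟩)
    · exact absurd (Set.mem_inter himg hy) (by rw [hY]; exact fun h => h)
    · -- y τ x with x ∈ Y, so x ∈ img τ Y ∩ Y
      have : x ∈ img τ Y ∩ Y := ⟨⟨y, hy, hxy⟩, hx⟩
      rw [hY] at this
      exact this
  refine ⟨hyind, ?_⟩
  rintro ⟨z, hz, hyz⟩
  -- z ∈ ind τ M Y and τ y z with y ∈ Y, so z ∈ img τ Y
  exact hz.2 (Or.inl ⟨y, hy, hyz⟩)

lemma mu_subset_ind (Y : Set (List α)) : mu τ M Y ⊆ ind τ M Y :=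
  Set.diff_subset

lemma indep_mu (Y : Set (List α)) : indep τ (mu τ M Y) := by
  unfold indep
  ext y
  simp only [Set.mem_inter_iff, Set.mem_empty_iff_false, iff_false]
  rintro ⟨⟨x, hx, hxy⟩, hy⟩
  exact hx.2 ⟨y, hy.1, hxy⟩

lemma mu_iter_indep (L : Set (List α)) (hLM : L ⊆ M) (hL : indep τ L) (j : ℕ) :
    indep τ ((mu τ M)^[j] L) ∧ (mu τ M)^[j] L ⊆ M := by
  induction j with
  | zero => exact ⟨hL, hLM⟩
  | succ j ih =>
    rw [Function.iterate_succ_apply']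
    exact ⟨indep_mu τ M _, ((mu_subset_ind τ M _).trans Set.diff_subset)⟩

/-- main containment lemma -/
lemma main_one {Y : Set (List α)} (hsm : smooth τ M) (hYM : Y ⊆ M) (hY : indep τ Y)
    {w : List α} (hw : w ∈ ind τ M (mu τ M Y)) (hwX : w ∉ mu τ M Y) :
    ∃ k ≥ 2, w ∈ (sig τ M Y)^[k] (mu τ M Y \ Y) := by
  set X := mu τ M Y with hXdef
  set D := X \ Y with hDdef
  have hYX : Y ⊆ X := subset_mu τ M hYM hY
  have hXYD : X = Y ∪ D := (Set.union_diff_cancel hYX).symm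
  -- σ^[n] X = σ^[n] D for n ≥ 1
  have hiterX : ∀ n : ℕ, (sig τ M Y)^[n + 1] X = (sig τ M Y)^[n + 1] D := by
    intro n
    rw [hXYD, sig_iter_union, sig_iter_self, Set.empty_union]
  have hwY : w ∈ ind τ M Y := ind_anti τ M hYX hw
  have hwnpre : w ∉ pre τ X := fun h => hw.2 (Or.inr h)
  -- decomposition of ind Y
  have hdecomp : ind τ M Y ⊆ X ∪ sig τ M Y (ind τ M Y) := by
    intro z hz
    by_cases hp : z ∈ pre τ (ind τ M Y)
    · exact Or.inr ⟨hp, hz⟩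
    · exact Or.inl ⟨hz, hp⟩
  by_cases hex : ∃ k ≥ 2, w ∈ (sig τ M Y)^[k] D
  · exact hex
  push_neg at hex
  -- w ∈ σ^[n] (ind Y) for all n
  have hall : ∀ n : ℕ, w ∈ (sig τ M Y)^[n] (ind τ M Y) := by
    intro n
    induction n with
    | zero => simpa using hwY
    | succ n ih =>
      have hsub : (sig τ M Y)^[n] (ind τ M Y) ⊆
          (sig τ M Y)^[n] X ∪ (sig τ M Y)^[n + 1] (ind τ M Y) := by
        have := sig_iter_mono τ M Y n hdecomp
        rwa [sig_iter_union, ← Function.iterate_succ_apply] at this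
      rcases hsub ih with h | h
      · exfalso
        match n, h with
        | 0, h => exact hwX h
        | 1, h => exact hwnpre (sig_subset_pre τ M Y X h)
        | (m + 2), h =>
          exact hex (m + 2) (by omega) (by rw [← hiterX (m + 1)]; exact h)
      · exact h
  have hwInter : w ∈ opInter (sig τ M Y) (ind τ M Y) := by
    simp only [opInter, Set.mem_iInter]
    intro n _
    exact hall n
  have := hsm Y hwInter
  simp only [opStar, Set.mem_iUnion] at this
  obtain ⟨k, hk⟩ := this
  exfalso
  match k, hk with
  | 0, hk => exact hwX hk
  | 1, hk => exact hwnpre (sig_subset_pre τ M Y X hk)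
  | (m + 2), hk =>
    exact hex (m + 2) (by omega) (by rw [← hiterX (m + 1)]; exact hk)

end Aux

theorem stmt10 {α : Type*} (τ : List α → List α → Prop) (M L : Set (List α))
    (hsm : smooth τ M) (hLM : L ⊆ M) (hL : indep τ L)
    (i : ℕ) (hi : 1 ≤ i) :
    ind τ M ((mu τ M)^[i] L) ⊆
      (mu τ M)^[i] L ∪
        opGe (sig τ M ((mu τ M)^[i-1] L)) 2 ((mu τ M)^[i] L \ (mu τ M)^[i-1] L) ∧
    (mu τ M)^[i] L ∩
        opGe (sig τ M ((mu τ M)^[i-1] L)) 2 ((mu τ M)^[i] L \ (mu τ M)^[i-1] L) = ∅ ∧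
    (mu τ M)^[i] L ∪
        opGe (sig τ M ((mu τ M)^[i-1] L)) 2 ((mu τ M)^[i] L \ (mu τ M)^[i-1] L) ⊆
      (mu τ M)^[i] L ∪ opGe (pre τ) 2 ((mu τ M)^[i] L \ (mu τ M)^[i-1] L) := by

  obtain ⟨j, rfl⟩ : ∃ j, i = j + 1 := ⟨i - 1, by omega⟩
  simp only [Nat.add_sub_cancel]
  have hch := mu_iter_indep τ M L hLM hL j
  set Y := (mu τ M)^[j] L with hYdef
  have hYM : Y ⊆ M := hch.2
  have hY : indep τ Y := hch.1
  have hXeq : (mu τ M)^[j + 1] L = mu τ M Y := by rw [Function.iterate_succ_apply']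
  rw [hXeq]
  set X := mu τ M Y with hXdef
  set D := X \ Y with hDdef
  refine ⟨?_, ?_, ?_⟩
  · intro w hw
    by_cases hwX : w ∈ X
    · exact Or.inl hwX
    · obtain ⟨k, hk2, hk⟩ := main_one τ M hsm hYM hY hw hwX
      refine Or.inr ?_
      simp only [opGe, Set.mem_iUnion]
      exact ⟨k, hk2, hk⟩
  · ext w
    simp only [Set.mem_inter_iff, Set.mem_empty_iff_false, iff_false, not_and]
    intro hwX hwGe
    simp only [opGe, Set.mem_iUnion] at hwGe
    obtain ⟨k, hk2, hk⟩ := hwGe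
    obtain ⟨m, rfl⟩ : ∃ m, k = m + 2 := ⟨k - 2, by omega⟩
    rw [Function.iterate_succ_apply'] at hk
    have h1 : (sig τ M Y)^[m + 1] D ⊆ ind τ M Y := by
      rw [Function.iterate_succ_apply']
      exact sig_subset_ind τ M Y _
    have hwp : w ∈ pre τ (ind τ M Y) := pre_mono τ h1 (sig_subset_pre τ M Y _ hk)
    exact hwX.2 hwp
  · apply Set.union_subset_union_right
    intro w hw
    simp only [opGe, Set.mem_iUnion] at hw ⊢
    obtain ⟨k, hk2, hk⟩ := hw
    exact ⟨k, hk2, sig_iter_subset_pre_iter τ M Y D k hk⟩
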